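/- Let Q be a full acyclic conjunctive query with a set of variables {x,y} that is a maximum independent set of free variables (α_free(Q)=2), and suppose the number of maximal hyperedges of H(Q) is greater than 2. If each of x and y appears in exactly one maximal hyperedge, then H(Q) contains a chordless path of four vertices x–a–b–y. -/

import Mathlib

/-- Two vertices are neighbors in a hypergraph if some hyperedge contains both. -/
def Nbr {V : Type*} (E : Finset (Finset V)) (x y : V) : Prop :=
  ∃ e ∈ E, x ∈ e ∧ y ∈ e

/-- Join tree: a tree on the hyperedges with the running intersection property. -/
def IsJoinTreeOf {V ι : Type*} (T : SimpleGraph ι) (lab : ι → Finset V)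
    (E : Finset (Finset V)) : Prop :=
  T.IsTree ∧ (∀ i, lab i ∈ E) ∧ (∀ e ∈ E, ∃ i, lab i = e) ∧
    ∀ v : V, (T.induce {i | v ∈ lab i}).Preconnected

/-- A hypergraph is acyclic if it admits a join tree. -/
def HGAcyclic {V : Type*} (E : Finset (Finset V)) : Prop :=
  ∃ (ι : Type) (T : SimpleGraph ι) (lab : ι → Finset V), IsJoinTreeOf T lab E

/-- The maximal hyperedges of a hypergraph (w.r.t. strict containment). -/
def maximalEdges {V : Type*} [DecidableEq V] (E : Finset (Finset V)) :
    Finset (Finset V) :=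
  E.filter fun e => ∀ e' ∈ E, ¬ e ⊂ e'

/-- A chordless path of four (distinct) vertices: consecutive vertices are
neighbors, non-consecutive vertices are not. -/
def ChordlessPath4 {V : Type*} (E : Finset (Finset V)) (a b c d : V) : Prop :=
  a ≠ b ∧ a ≠ c ∧ a ≠ d ∧ b ≠ c ∧ b ≠ d ∧ c ≠ d ∧
  Nbr E a b ∧ Nbr E b c ∧ Nbr E c d ∧
  ¬ Nbr E a c ∧ ¬ Nbr E a d ∧ ¬ Nbr E b d

/-- Neighborhood is symmetric. -/
theorem Nbr.symm' {V : Type*} {E : Finset (Finset V)} {u v : V}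
    (h : Nbr E u v) : Nbr E v u := by
  obtain ⟨e, he, hu, hv⟩ := h
  exact ⟨e, he, hv, hu⟩

/-- Every hyperedge is contained in a maximal hyperedge. -/
theorem exists_maximal_superset {V : Type*} [DecidableEq V]
    (E : Finset (Finset V)) {e : Finset V} (he : e ∈ E) :
    ∃ m ∈ maximalEdges E, e ⊆ m := by
  classical
  obtain ⟨m, hm, hmx⟩ := Finset.exists_maximal (s := E.filter fun e' => e ⊆ e')
    ⟨e, Finset.mem_filter.2 ⟨he, Finset.Subset.refl e⟩⟩
  rw [Finset.mem_filter] at hm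
  refine ⟨m, ?_, hm.2⟩
  rw [maximalEdges, Finset.mem_filter]
  exact ⟨hm.1, fun e' he' hlt =>
    hlt.2 (hmx (Finset.mem_filter.2 ⟨he', hm.2.trans hlt.subset⟩) hlt.subset)⟩

/-- Let `Q` be a full acyclic CQ (all variables free) with
`{x, y}` a maximum independent set (so `α_free(Q) = 2`, expressed by: `x, y` are
independent and every independent set of vertices has size at most 2), whose
hypergraph has more than two maximal hyperedges.  If each of `x` and `y` appears
in exactly one maximal hyperedge, then `H(Q)` contains a chordless path
`x – a – b – y` of four vertices. -/
theorem chordless_four_path_case_one {V : Type*} [DecidableEq V]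
    (E : Finset (Finset V)) (hacyc : HGAcyclic E)
    (x y : V) (hxy : x ≠ y) (hnxy : ¬ Nbr E x y)
    (hx : ∃ e ∈ E, x ∈ e) (hy : ∃ e ∈ E, y ∈ e)
    (halpha : ∀ S : Finset V, (∀ v ∈ S, ∃ e ∈ E, v ∈ e) →
        (∀ a ∈ S, ∀ b ∈ S, a ≠ b → ¬ Nbr E a b) → S.card ≤ 2)
    (hmh : 2 < (maximalEdges E).card)
    (hux : ∃! e, e ∈ maximalEdges E ∧ x ∈ e)
    (huy : ∃! e, e ∈ maximalEdges E ∧ y ∈ e) :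
    ∃ a b : V, ChordlessPath4 E x a b y := by
  classical
  obtain ⟨ex, ⟨hexM, hxex⟩, huxu⟩ := hux
  obtain ⟨ey, ⟨heyM, hyey⟩, huyu⟩ := huy
  have hexE : ex ∈ E := (Finset.mem_filter.1 hexM).1
  have heyE : ey ∈ E := (Finset.mem_filter.1 heyM).1
  -- Neighbors of x are exactly the vertices of ex, similarly for y.
  have nbrx : ∀ v, Nbr E x v ↔ v ∈ ex := by
    intro v
    constructor
    · rintro ⟨e, he, hxe, hve⟩
      obtain ⟨m, hmM, hem⟩ := exists_maximal_superset E he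
      have hm := huxu m ⟨hmM, hem hxe⟩
      subst hm; exact hem hve
    · intro hv; exact ⟨ex, hexE, hxex, hv⟩
  have nbry : ∀ v, Nbr E y v ↔ v ∈ ey := by
    intro v
    constructor
    · rintro ⟨e, he, hye, hve⟩
      obtain ⟨m, hmM, hem⟩ := exists_maximal_superset E he
      have hm := huyu m ⟨hmM, hem hye⟩
      subst hm; exact hem hve
    · intro hv; exact ⟨ey, heyE, hyey, hv⟩
  have hyex : y ∉ ex := fun h => hnxy ((nbrx y).2 h)
  have hxey : x ∉ ey := fun h => hnxy (((nbry x).2 h).symm')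
  -- There is a third maximal edge f.
  obtain ⟨f, hfM, hfnx, hfny⟩ : ∃ f ∈ maximalEdges E, f ≠ ex ∧ f ≠ ey := by
    by_contra h
    push_neg at h
    have hsub : maximalEdges E ⊆ {ex, ey} := by
      intro f hf
      rcases eq_or_ne f ex with h1 | h1
      · simp [h1]
      · simp [h f hf h1]
    have h1 := Finset.card_le_card hsub
    have h2 : ({ex, ey} : Finset (Finset V)).card ≤ 2 :=
      (Finset.card_insert_le _ _).trans (by simp)
    omega
  have hfE : f ∈ E := (Finset.mem_filter.1 hfM).1
  have hfmax : ∀ e' ∈ E, ¬ f ⊂ e' := (Finset.mem_filter.1 hfM).2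
  -- f is contained in ex ∪ ey, else {x, y, z} is an independent set of size 3.
  have hfsub : f ⊆ ex ∪ ey := by
    by_contra h
    obtain ⟨z, hzf, hz⟩ := Finset.not_subset.1 h
    rw [Finset.mem_union] at hz
    push_neg at hz
    have hzx : z ≠ x := fun h => hz.1 (h ▸ hxex)
    have hzy : z ≠ y := fun h => hz.2 (h ▸ hyey)
    have hcard : ({x, y, z} : Finset V).card = 3 := by
      rw [Finset.card_insert_of_notMem (by simp [hxy, hzx.symm]),
        Finset.card_insert_of_notMem (by simp [hzy.symm]), Finset.card_singleton]
    have hle := halpha {x, y, z} ?_ ?_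
    · omega
    · intro v hv
      simp only [Finset.mem_insert, Finset.mem_singleton] at hv
      rcases hv with rfl | rfl | rfl
      · exact hx
      · exact hy
      · exact ⟨f, hfE, hzf⟩
    · intro a ha b hb hab
      simp only [Finset.mem_insert, Finset.mem_singleton] at ha hb
      rcases ha with rfl | rfl | rfl <;> rcases hb with rfl | rfl | rfl <;>
        first
        | exact absurd rfl hab
        | exact hnxy
        | exact fun h => hnxy h.symm'
        | exact fun h => hz.1 ((nbrx b).1 h)
        | exact fun h => hz.1 ((nbrx a).1 h.symm')
        | exact fun h => hz.2 ((nbry b).1 h)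
        | exact fun h => hz.2 ((nbry a).1 h.symm')
  -- Pick a ∈ f \ ey (so a ∈ ex) and b ∈ f \ ex (so b ∈ ey).
  obtain ⟨a, haf, haey⟩ := Finset.not_subset.1
    (show ¬ f ⊆ ey from fun h => hfmax ey heyE (h.ssubset_of_ne hfny))
  obtain ⟨b, hbf, hbex⟩ := Finset.not_subset.1
    (show ¬ f ⊆ ex from fun h => hfmax ex hexE (h.ssubset_of_ne hfnx))
  have haex : a ∈ ex := by
    have := hfsub haf
    rw [Finset.mem_union] at this
    tauto
  have hbey : b ∈ ey := by
    have := hfsub hbf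
    rw [Finset.mem_union] at this
    tauto
  refine ⟨a, b, ?_, ?_, hxy, ?_, ?_, ?_, ?_, ?_, ?_, ?_, hnxy, ?_⟩
  · -- x ≠ a
    rintro rfl
    exact hbex ((nbrx b).1 ⟨f, hfE, haf, hbf⟩)
  · -- x ≠ b
    rintro rfl
    exact hxey hbey
  · -- a ≠ b
    rintro rfl
    exact haey hbey
  · -- a ≠ y
    rintro rfl
    exact haey hyey
  · -- b ≠ y
    rintro rfl
    exact haey ((nbry a).1 ⟨f, hfE, hbf, haf⟩)
  · -- Nbr x a
    exact (nbrx a).2 haex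
  · -- Nbr a b
    exact ⟨f, hfE, haf, hbf⟩
  · -- Nbr b y
    exact ((nbry b).2 hbey).symm'
  · -- ¬ Nbr x b
    exact fun h => hbex ((nbrx b).1 h)
  · -- ¬ Nbr a y
    exact fun h => haey ((nbry a).1 h.symm')
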